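/- arXiv:2210.09721 — 2 statements merged into one kernel-verified Lean document; each statement's English description precedes it below -/
import Mathlib

section
/- Let n, m ∈ ℕ, let L ⊆ {1,…,n}, and for each i let f_i : ℝ → ℝ be globally Lipschitz with constant L_{pi} > 0 when i ∈ L, and f_i = id with L_{pi} = 1 when i ∉ L. Let W = diag(L_{p1},…,L_{pn}), A ∈ ℝ^{n×n}, B ∈ ℝ^{n×m}, Ã = W A. Suppose there exists a symmetric positive definite P ∈ ℝ^{n×n} with P_{ij} = P_{ji} = 0 for every i ∈ L and every j ≠ i such that Ã^T P Ã − P is negative definite. Define V(x1, x2) = (x1 − x2)^T P (x1 − x2). Then there exist constants c1 > 0 and c2 ≥ 0 such that for all x1, x2 ∈ ℝ^n and u1, u2 ∈ ℝ^m: V(f(A x1 + B u1), f(A x2 + B u2)) − V(x1, x2) ≤ −c1 ‖x1 − x2‖² + c2 ‖u1 − u2‖², where f is applied componentwise and norms are Euclidean. -/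
open Matrix

/-- Euclidean norm of a finitely-indexed real vector. -/
noncomputable def eNorm {ι : Type*} [Fintype ι] (v : ι → ℝ) : ℝ :=
  Real.sqrt (∑ i, (v i) ^ 2)

lemma eNorm_nonneg' {ι : Type*} [Fintype ι] (v : ι → ℝ) : 0 ≤ eNorm v :=
  Real.sqrt_nonneg _

lemma eNorm_sq' {ι : Type*} [Fintype ι] (v : ι → ℝ) : (eNorm v) ^ 2 = ∑ i, (v i) ^ 2 :=
  Real.sq_sqrt (Finset.sum_nonneg fun i _ => sq_nonneg _)

lemma abs_le_eNorm' {ι : Type*} [Fintype ι] (v : ι → ℝ) (i : ι) : |v i| ≤ eNorm v := by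
  rw [← Real.sqrt_sq_eq_abs]
  exact Real.sqrt_le_sqrt (Finset.single_le_sum (fun j _ => sq_nonneg (v j)) (Finset.mem_univ i))

lemma dot_bound' {a b : ℕ} (N : Matrix (Fin a) (Fin b) ℝ) (z : Fin a → ℝ) (w : Fin b → ℝ) :
    z ⬝ᵥ (N *ᵥ w) ≤ (∑ i, ∑ j, |N i j|) * (eNorm z * eNorm w) := by
  simp only [dotProduct, Matrix.mulVec, Finset.mul_sum, Finset.sum_mul]
  refine Finset.sum_le_sum fun i _ => Finset.sum_le_sum fun j _ => ?_
  calc z i * (N i j * w j) ≤ |z i * (N i j * w j)| := le_abs_self _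
    _ = |N i j| * (|z i| * |w j|) := by rw [abs_mul, abs_mul]; ring
    _ ≤ |N i j| * (eNorm z * eNorm w) := by
        refine mul_le_mul_of_nonneg_left ?_ (abs_nonneg _)
        exact mul_le_mul (abs_le_eNorm' z i) (abs_le_eNorm' w j) (abs_nonneg _) (eNorm_nonneg' _)

lemma mulVec_dot' {a b : ℕ} (M : Matrix (Fin a) (Fin b) ℝ) (x : Fin b → ℝ) (u : Fin a → ℝ) :
    (M *ᵥ x) ⬝ᵥ u = x ⬝ᵥ (Mᵀ *ᵥ u) := by
  rw [Matrix.dotProduct_mulVec, Matrix.vecMul_transpose]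

lemma neg_quadform_bound' {n : ℕ} (M : Matrix (Fin n) (Fin n) ℝ)
    (h : ∀ v : Fin n → ℝ, v ≠ 0 → v ⬝ᵥ (M *ᵥ v) < 0) :
    ∃ lam : ℝ, 0 < lam ∧ ∀ v : Fin n → ℝ, v ⬝ᵥ (M *ᵥ v) ≤ -lam * ∑ i, (v i) ^ 2 := by
  rcases Nat.eq_zero_or_pos n with hn | hn
  · subst hn
    refine ⟨1, one_pos, fun v => ?_⟩
    simp [dotProduct]
  · set g : EuclideanSpace ℝ (Fin n) → ℝ := fun v => (v : Fin n → ℝ) ⬝ᵥ (M *ᵥ (v : Fin n → ℝ))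
      with hg
    have hc : ∀ i : Fin n, Continuous fun v : EuclideanSpace ℝ (Fin n) => v i :=
      fun i => (EuclideanSpace.proj i).continuous
    have hgexp : ∀ v : EuclideanSpace ℝ (Fin n), g v = ∑ i, v i * ∑ j, M i j * v j :=
      fun v => rfl
    have hcont : Continuous g := by
      have : Continuous fun v : EuclideanSpace ℝ (Fin n) => ∑ i, v i * ∑ j, M i j * v j := by
        refine continuous_finset_sum _ fun i _ => (hc i).mul ?_
        exact continuous_finset_sum _ fun j _ => continuous_const.mul (hc j)
      exact this
    have i0 : Fin n := ⟨0, hn⟩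
    have hpt : (EuclideanSpace.single i0 (1:ℝ)) ∈ Metric.sphere (0 : EuclideanSpace ℝ (Fin n)) 1 := by
      simp [mem_sphere_zero_iff_norm, EuclideanSpace.norm_single]
    obtain ⟨v0, hv0s, hmax⟩ := (isCompact_sphere (0 : EuclideanSpace ℝ (Fin n)) 1).exists_isMaxOn
      ⟨_, hpt⟩ hcont.continuousOn
    have hv0norm : ‖v0‖ = 1 := mem_sphere_zero_iff_norm.mp hv0s
    have hv0ne : (v0 : Fin n → ℝ) ≠ 0 := by
      intro h0
      have : v0 = 0 := by simpa using h0
      rw [this] at hv0norm; simp at hv0norm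
    have hgneg : g v0 < 0 := h v0 hv0ne
    refine ⟨-g v0, by linarith, fun v => ?_⟩
    by_cases hv : v = 0
    · subst hv; simp
    · have hsum : 0 < ∑ i, (v i) ^ 2 := by
        obtain ⟨i, hi⟩ := Function.ne_iff.mp hv
        exact Finset.sum_pos' (fun j _ => sq_nonneg _)
          ⟨i, Finset.mem_univ i, pow_pos (abs_pos.mpr hi) 2 |>.trans_le (by rw [sq_abs])⟩
      set t := Real.sqrt (∑ i, (v i) ^ 2) with ht
      have htpos : 0 < t := Real.sqrt_pos.mpr hsum
      have ht2 : t ^ 2 = ∑ i, (v i) ^ 2 := Real.sq_sqrt hsum.le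
      set u : EuclideanSpace ℝ (Fin n) := t⁻¹ • (WithLp.toLp 2 v : EuclideanSpace ℝ (Fin n)) with hu
      have hunorm : ‖u‖ = 1 := by
        rw [hu, norm_smul]
        rw [EuclideanSpace.norm_eq]
        simp only [Real.norm_eq_abs]
        have : ∑ i, |v i| ^ 2 = ∑ i, (v i) ^ 2 := by
          refine Finset.sum_congr rfl fun i _ => sq_abs _
        rw [this, ← ht, abs_inv, abs_of_pos htpos]
        field_simp
      have humem : u ∈ Metric.sphere (0 : EuclideanSpace ℝ (Fin n)) 1 :=
        mem_sphere_zero_iff_norm.mpr hunorm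
      have hgu : g u ≤ g v0 := hmax humem
      have hvu : (WithLp.toLp 2 v : EuclideanSpace ℝ (Fin n)) = t • u := by
        rw [hu, smul_smul, mul_inv_cancel₀ (ne_of_gt htpos), one_smul]
      have hscale : g (t • u) = t ^ 2 * g u := by
        have hcoe : ((t • u : EuclideanSpace ℝ (Fin n)) : Fin n → ℝ) = t • (u : Fin n → ℝ) := rfl
        rw [hg]
        simp only [hcoe]
        rw [Matrix.mulVec_smul, dotProduct_smul, smul_dotProduct]
        simp [smul_eq_mul]; ring
      have : g (WithLp.toLp 2 v) = g (t • u) := by rw [← hvu]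
      rw [hgexp] at this
      have hfinal : ∑ i, v i * ∑ j, M i j * v j ≤ t ^ 2 * g v0 := by
        rw [this, hscale]
        exact mul_le_mul_of_nonneg_left hgu (sq_nonneg t)
      calc v ⬝ᵥ (M *ᵥ v) = ∑ i, v i * ∑ j, M i j * v j := rfl
        _ ≤ t ^ 2 * g v0 := hfinal
        _ = -(-g v0) * ∑ i, (v i) ^ 2 := by rw [ht2]; ring

lemma struct_bound' {n : ℕ} (L : Finset (Fin n)) (P : Matrix (Fin n) (Fin n) ℝ)
    (hPdiag : ∀ i ∈ L, 0 ≤ P i i)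
    (hPstruct : ∀ i ∈ L, ∀ j : Fin n, j ≠ i → P i j = 0 ∧ P j i = 0)
    (y yt : Fin n → ℝ)
    (habs : ∀ i ∈ L, |y i| ≤ |yt i|)
    (heq : ∀ i ∉ L, y i = yt i) :
    y ⬝ᵥ (P *ᵥ y) ≤ yt ⬝ᵥ (P *ᵥ yt) := by
  have expand : ∀ u : Fin n → ℝ, u ⬝ᵥ (P *ᵥ u) = ∑ i, ∑ j, P i j * (u i * u j) := by
    intro u
    simp only [dotProduct, Matrix.mulVec, Finset.mul_sum]
    exact Finset.sum_congr rfl fun i _ => Finset.sum_congr rfl fun j _ => by ring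
  rw [expand, expand]
  refine Finset.sum_le_sum fun i _ => Finset.sum_le_sum fun j _ => ?_
  by_cases hiL : i ∈ L
  · by_cases hji : j = i
    · subst hji
      refine mul_le_mul_of_nonneg_left ?_ (hPdiag j hiL)
      have h1 := habs j hiL
      calc y j * y j = |y j| * |y j| := (abs_mul_abs_self _).symm
        _ ≤ |yt j| * |yt j| := mul_le_mul h1 h1 (abs_nonneg _) (abs_nonneg _)
        _ = yt j * yt j := abs_mul_abs_self _
    · rw [(hPstruct i hiL j hji).1]; simp
  · by_cases hjL : j ∈ L
    · have hij : i ≠ j := fun h => hiL (h ▸ hjL)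
      rw [(hPstruct j hjL i hij).2]; simp
    · rw [heq i hiL, heq j hjL]

lemma expand_quad' {n : ℕ} (P : Matrix (Fin n) (Fin n) ℝ) (hPsym : Pᵀ = P)
    (a b : Fin n → ℝ) :
    (a + b) ⬝ᵥ (P *ᵥ (a + b)) =
      a ⬝ᵥ (P *ᵥ a) + 2 * (a ⬝ᵥ (P *ᵥ b)) + b ⬝ᵥ (P *ᵥ b) := by
  have hsym : b ⬝ᵥ (P *ᵥ a) = a ⬝ᵥ (P *ᵥ b) := by
    rw [Matrix.dotProduct_mulVec a P b]
    conv_rhs => rw [← hPsym]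
    rw [Matrix.vecMul_transpose, dotProduct_comm]
  rw [Matrix.mulVec_add, add_dotProduct, dotProduct_add, dotProduct_add, hsym]
  ring

set_option maxHeartbeats 1000000 in
/-- **Dissipation-form Lyapunov decrease inequality** from the proof of the paper's main
δISS theorem: under the structured Lyapunov condition `Ãᵀ P Ã - P ≺ 0`, the function
`V(x1,x2) = (x1-x2)ᵀ P (x1-x2)` satisfies
`V(f(Ax1+Bu1), f(Ax2+Bu2)) - V(x1,x2) ≤ -c1‖x1-x2‖² + c2‖u1-u2‖²`
for some `c1 > 0`, `c2 ≥ 0`. -/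
theorem lyapunov_decrease
    (n m : ℕ) (L : Finset (Fin n)) (f : Fin n → ℝ → ℝ) (Lp : Fin n → ℝ)
    (hLip : ∀ i ∈ L, 0 < Lp i ∧ ∀ a b : ℝ, |f i a - f i b| ≤ Lp i * |a - b|)
    (hid : ∀ i ∉ L, f i = id ∧ Lp i = 1)
    (A : Matrix (Fin n) (Fin n) ℝ) (B : Matrix (Fin n) (Fin m) ℝ)
    (P : Matrix (Fin n) (Fin n) ℝ)
    (hPsym : Pᵀ = P)
    (hPpos : ∀ v : Fin n → ℝ, v ≠ 0 → 0 < v ⬝ᵥ (P *ᵥ v))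
    (hPstruct : ∀ i ∈ L, ∀ j : Fin n, j ≠ i → P i j = 0 ∧ P j i = 0)
    (hNeg : ∀ v : Fin n → ℝ, v ≠ 0 →
      v ⬝ᵥ (((Matrix.diagonal Lp * A)ᵀ * P * (Matrix.diagonal Lp * A) - P) *ᵥ v) < 0) :
    ∃ c1 : ℝ, 0 < c1 ∧ ∃ c2 : ℝ, 0 ≤ c2 ∧
      ∀ (x1 x2 : Fin n → ℝ) (u1 u2 : Fin m → ℝ),
        ((fun i => f i ((A *ᵥ x1 + B *ᵥ u1) i)) - (fun i => f i ((A *ᵥ x2 + B *ᵥ u2) i)))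
            ⬝ᵥ (P *ᵥ ((fun i => f i ((A *ᵥ x1 + B *ᵥ u1) i))
              - (fun i => f i ((A *ᵥ x2 + B *ᵥ u2) i))))
          - (x1 - x2) ⬝ᵥ (P *ᵥ (x1 - x2))
        ≤ -c1 * (eNorm (x1 - x2)) ^ 2 + c2 * (eNorm (u1 - u2)) ^ 2 := by
  classical
  set At := Matrix.diagonal Lp * A with hAt
  set Bt := Matrix.diagonal Lp * B with hBt
  obtain ⟨lam, hlam, hlamb⟩ := neg_quadform_bound' (Atᵀ * P * At - P) hNeg
  set N := Atᵀ * P * Bt with hN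
  set N' := Btᵀ * P * Bt with hN'
  set C := ∑ i, ∑ j, |N i j| with hC
  set C' := ∑ i, ∑ j, |N' i j| with hC'
  have hCnn : 0 ≤ C := Finset.sum_nonneg fun i _ => Finset.sum_nonneg fun j _ => abs_nonneg _
  have hC'nn : 0 ≤ C' := Finset.sum_nonneg fun i _ => Finset.sum_nonneg fun j _ => abs_nonneg _
  refine ⟨lam / 2, by linarith, 2 * C ^ 2 / lam + C',
    add_nonneg (div_nonneg (mul_nonneg (by norm_num) (sq_nonneg C)) hlam.le) hC'nn,
    fun x1 x2 u1 u2 => ?_⟩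
  set z := x1 - x2 with hz
  set w := u1 - u2 with hw
  set v := A *ᵥ z + B *ᵥ w with hv
  set y := (fun i => f i ((A *ᵥ x1 + B *ᵥ u1) i)) - (fun i => f i ((A *ᵥ x2 + B *ᵥ u2) i))
    with hy
  set yt := At *ᵥ z + Bt *ᵥ w with hyt
  -- pointwise facts
  have hvdiff : ∀ i, (A *ᵥ x1 + B *ᵥ u1) i - (A *ᵥ x2 + B *ᵥ u2) i = v i := by
    intro i
    simp only [hv, hz, hw, Matrix.mulVec_sub, Pi.add_apply, Pi.sub_apply]
    ring
  have hyti : ∀ i, yt i = Lp i * v i := by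
    intro i
    simp only [hyt, hAt, hBt, Pi.add_apply, ← Matrix.mulVec_mulVec, Matrix.mulVec_diagonal]
    simp only [hv, Pi.add_apply, mul_add]
  have habs : ∀ i ∈ L, |y i| ≤ |yt i| := by
    intro i hiL
    obtain ⟨hLp, hlip⟩ := hLip i hiL
    have : |y i| ≤ Lp i * |v i| := by
      have := hlip ((A *ᵥ x1 + B *ᵥ u1) i) ((A *ᵥ x2 + B *ᵥ u2) i)
      rw [hvdiff i] at this
      simpa [hy] using this
    rw [hyti i, abs_mul, abs_of_pos hLp]
    exact this
  have heq : ∀ i ∉ L, y i = yt i := by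
    intro i hiL
    obtain ⟨hfid, hLp1⟩ := hid i hiL
    rw [hyti i, hLp1, one_mul, ← hvdiff i]
    simp [hy, hfid]
  have hPdiag : ∀ i ∈ L, 0 ≤ P i i := by
    intro i _
    have hne : (Pi.single i (1:ℝ) : Fin n → ℝ) ≠ 0 := by
      intro h0
      have := congrFun h0 i
      simp at this
    have := hPpos (Pi.single i 1) hne
    have hcalc : (Pi.single i (1:ℝ)) ⬝ᵥ (P *ᵥ Pi.single i 1) = P i i := by
      rw [single_dotProduct, one_mul, Matrix.mulVec_single]
      simp
    rw [hcalc] at this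
    exact this.le
  -- step 1: structural bound
  have step1 : y ⬝ᵥ (P *ᵥ y) ≤ yt ⬝ᵥ (P *ᵥ yt) :=
    struct_bound' L P hPdiag hPstruct y yt habs heq
  -- step 2: expansion
  have e1 : (At *ᵥ z) ⬝ᵥ (P *ᵥ (At *ᵥ z)) = z ⬝ᵥ ((Atᵀ * P * At) *ᵥ z) := by
    rw [mulVec_dot', Matrix.mulVec_mulVec, Matrix.mulVec_mulVec]
  have e2 : (At *ᵥ z) ⬝ᵥ (P *ᵥ (Bt *ᵥ w)) = z ⬝ᵥ (N *ᵥ w) := by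
    rw [mulVec_dot', Matrix.mulVec_mulVec, Matrix.mulVec_mulVec, hN]
  have e3 : (Bt *ᵥ w) ⬝ᵥ (P *ᵥ (Bt *ᵥ w)) = w ⬝ᵥ (N' *ᵥ w) := by
    rw [mulVec_dot', Matrix.mulVec_mulVec, Matrix.mulVec_mulVec, hN']
  have key : yt ⬝ᵥ (P *ᵥ yt) - z ⬝ᵥ (P *ᵥ z)
      = z ⬝ᵥ ((Atᵀ * P * At - P) *ᵥ z) + 2 * (z ⬝ᵥ (N *ᵥ w)) + w ⬝ᵥ (N' *ᵥ w) := by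
    rw [hyt, expand_quad' P hPsym, e1, e2, e3, Matrix.sub_mulVec, dotProduct_sub]
    ring
  -- bounds
  have b1 : z ⬝ᵥ ((Atᵀ * P * At - P) *ᵥ z) ≤ -lam * (eNorm z) ^ 2 := by
    rw [eNorm_sq']; exact hlamb z
  have b2 : z ⬝ᵥ (N *ᵥ w) ≤ C * (eNorm z * eNorm w) := dot_bound' N z w
  have b3 : w ⬝ᵥ (N' *ᵥ w) ≤ C' * (eNorm w * eNorm w) := dot_bound' N' w w
  have hnz : 0 ≤ eNorm z := eNorm_nonneg' z
  have hnw : 0 ≤ eNorm w := eNorm_nonneg' w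
  set nz := eNorm z with hnzd
  set nw := eNorm w with hnwd
  have cross : 2 * (C * (nz * nw)) ≤ lam / 2 * nz ^ 2 + 2 * C ^ 2 / lam * nw ^ 2 := by
    have hD : 2 * C ^ 2 / lam * nw ^ 2 * lam = 2 * C ^ 2 * nw ^ 2 := by
      field_simp
    nlinarith [sq_nonneg (lam * nz - 2 * C * nw), hlam, hD, sq_nonneg nz, sq_nonneg nw]
  calc y ⬝ᵥ (P *ᵥ y) - z ⬝ᵥ (P *ᵥ z)
      ≤ yt ⬝ᵥ (P *ᵥ yt) - z ⬝ᵥ (P *ᵥ z) := by linarith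
    _ = z ⬝ᵥ ((Atᵀ * P * At - P) *ᵥ z) + 2 * (z ⬝ᵥ (N *ᵥ w)) + w ⬝ᵥ (N' *ᵥ w) := key
    _ ≤ -lam * nz ^ 2 + 2 * (C * (nz * nw)) + C' * (nw * nw) := by linarith
    _ ≤ -(lam / 2) * nz ^ 2 + (2 * C ^ 2 / lam + C') * nw ^ 2 := by nlinarith [cross]
end

section
/- Let n, m, l ∈ ℕ, A ∈ ℝ^{n×n}, B ∈ ℝ^{n×m}, C ∈ ℝ^{l×n}, D ∈ ℝ^{l×m}, L ∈ ℝ^{n×l}. For each i = 1,…,n let f_i : ℝ → ℝ be globally Lipschitz with constant L_{pi} > 0 (|f_i(a) − f_i(b)| ≤ L_{pi}|a − b| for all a, b), and let λ = max_i L_{pi}. Consider the system x(k+1) = f(A x(k) + B u(k)), y(k) = C x(k) + D u(k), and the observer x̂(k+1) = f(A x̂(k) + B u(k) + L(y(k) − ŷ(k))), ŷ(k) = C x̂(k) + D u(k), with f applied componentwise, and let e(k) = x(k) − x̂(k). Then for every k and every input u(k): ‖e(k+1)‖ ≤ λ ‖A − LC‖ ‖e(k)‖, where ‖A − LC‖ is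 the ℓ²-operator norm and the vector norms are Euclidean. -/
open Matrix
open scoped Matrix.Norms.L2Operator

lemma eNorm_eq_norm {n : ℕ} (v : Fin n → ℝ) :
    eNorm v = ‖(EuclideanSpace.equiv (Fin n) ℝ).symm v‖ := by
  rw [EuclideanSpace.norm_eq, eNorm]
  congr 1
  refine Finset.sum_congr rfl fun i _ => ?_
  simp [Real.norm_eq_abs, sq_abs]

lemma eNorm_nonneg {n : ℕ} (v : Fin n → ℝ) : 0 ≤ eNorm v :=
  Real.sqrt_nonneg _

lemma eNorm_mulVec_le {n m : ℕ} (M : Matrix (Fin n) (Fin m) ℝ) (v : Fin m → ℝ) :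
    eNorm (M *ᵥ v) ≤ ‖M‖ * eNorm v := by
  rw [eNorm_eq_norm, eNorm_eq_norm]
  exact M.l2_opNorm_mulVec ((EuclideanSpace.equiv (Fin m) ℝ).symm v)

/-- **One-step observer error contraction** (key step of Proposition 13 of the paper):
with `λ = max_i L_{pi}`, the estimation error `e(k) = x(k) - x̂(k)` of the observer
satisfies `‖e(k+1)‖ ≤ λ ‖A - LC‖ ‖e(k)‖`, with `‖A - LC‖` the ℓ²-operator norm. -/
theorem observer_one_step_bound
    (n m l : ℕ)
    (A : Matrix (Fin n) (Fin n) ℝ) (B : Matrix (Fin n) (Fin m) ℝ)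
    (C : Matrix (Fin l) (Fin n) ℝ) (D : Matrix (Fin l) (Fin m) ℝ)
    (L : Matrix (Fin n) (Fin l) ℝ)
    (f : Fin n → ℝ → ℝ) (Lp : Fin n → ℝ)
    (hLp : ∀ i, 0 < Lp i)
    (hLip : ∀ i, ∀ a b : ℝ, |f i a - f i b| ≤ Lp i * |a - b|)
    (lam : ℝ) (hlam_ub : ∀ i, Lp i ≤ lam) (hlam_mem : ∃ i, Lp i = lam)
    (x xh : Fin n → ℝ) (u : Fin m → ℝ) :
    eNorm ((fun i => f i ((A *ᵥ x + B *ᵥ u) i))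
        - (fun i => f i ((A *ᵥ xh + B *ᵥ u
            + L *ᵥ ((C *ᵥ x + D *ᵥ u) - (C *ᵥ xh + D *ᵥ u))) i)))
      ≤ lam * ‖A - L * C‖ * eNorm (x - xh) := by
  set v : Fin n → ℝ := A *ᵥ x + B *ᵥ u with hv
  set w : Fin n → ℝ := A *ᵥ xh + B *ᵥ u
      + L *ᵥ ((C *ᵥ x + D *ᵥ u) - (C *ᵥ xh + D *ᵥ u)) with hw
  have hlam0 : 0 ≤ lam := by
    obtain ⟨i, hi⟩ := hlam_mem
    exact hi ▸ (hLp i).le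
  -- Step 1: componentwise Lipschitz bound
  have step1 : eNorm ((fun i => f i (v i)) - (fun i => f i (w i)))
      ≤ lam * eNorm (v - w) := by
    rw [eNorm, eNorm, ← Real.sqrt_sq hlam0, ← Real.sqrt_mul (sq_nonneg lam)]
    apply Real.sqrt_le_sqrt
    rw [Finset.mul_sum]
    refine Finset.sum_le_sum fun i _ => ?_
    have h1 : |f i (v i) - f i (w i)| ≤ lam * |v i - w i| :=
      (hLip i (v i) (w i)).trans
        (mul_le_mul_of_nonneg_right (hlam_ub i) (abs_nonneg _))
    calc ((fun i => f i (v i)) - fun i => f i (w i)) i ^ 2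
        = |f i (v i) - f i (w i)| ^ 2 := by rw [sq_abs]; rfl
      _ ≤ (lam * |v i - w i|) ^ 2 := by
          exact pow_le_pow_left₀ (abs_nonneg _) h1 2
      _ = lam ^ 2 * (v - w) i ^ 2 := by
          rw [mul_pow, sq_abs]; rfl
  -- Step 2: v - w = (A - L*C) *ᵥ (x - xh)
  have step2 : v - w = (A - L * C) *ᵥ (x - xh) := by
    rw [hv, hw]
    have : (C *ᵥ x + D *ᵥ u) - (C *ᵥ xh + D *ᵥ u) = C *ᵥ (x - xh) := by
      rw [mulVec_sub]; abel
    rw [this]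
    ext i
    simp [sub_mulVec, mulVec_sub, Matrix.mulVec_mulVec]
    ring
  calc eNorm ((fun i => f i (v i)) - (fun i => f i (w i)))
      ≤ lam * eNorm (v - w) := step1
    _ = lam * eNorm ((A - L * C) *ᵥ (x - xh)) := by rw [step2]
    _ ≤ lam * (‖A - L * C‖ * eNorm (x - xh)) :=
        mul_le_mul_of_nonneg_left (eNorm_mulVec_le _ _) hlam0
    _ = lam * ‖A - L * C‖ * eNorm (x - xh) := by ring
end
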